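/- arXiv:0903.4847 — 2 statements merged into one kernel-verified Lean document; each statement's English description precedes it below -/
import Mathlib

section
/- Let F : Σ → P(Σ) be an upper semicontinuous set-valued map on a compact convex set Σ ⊂ ℝⁿ with nonempty closed convex values contained in Σ. Then for every initial point p₀ ∈ Σ the differential inclusion dp/dt ∈ F(p) − p admits at least one Lipschitz continuous solution p : [0,∞) → Σ with p(0) = p₀. -/
open Set Filter Topology

namespace AubinAux

variable {E : Type*} [NormedAddCommGroup E] [NormedSpace ℝ E]

/-- a selection of `F`, chosen by choice when `F z` is nonempty. -/
noncomputable def sel (F : E → Set E) (z : E) : E :=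
  @dite _ ((F z).Nonempty) (Classical.dec _) (fun h => h.choose) (fun _ => z)

lemma sel_mem {F : E → Set E} {z : E} (h : (F z).Nonempty) : sel F z ∈ F z := by
  rw [sel]
  split
  · exact Exists.choose_spec _
  · exact absurd h (by assumption)

/-- Euler polygon nodes. -/
noncomputable def euX (F : E → Set E) (p₀ : E) (ε : ℝ) : ℕ → E
  | 0 => p₀
  | j + 1 => euX F p₀ ε j + ε • (sel F (euX F p₀ ε j) - euX F p₀ ε j)

/-- Euler polygon slopes. -/
noncomputable def euS (F : E → Set E) (p₀ : E) (ε : ℝ) (j : ℕ) : E :=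
  sel F (euX F p₀ ε j) - euX F p₀ ε j

/-- Euler polygon. -/
noncomputable def euP (F : E → Set E) (p₀ : E) (ε : ℝ) (t : ℝ) : E :=
  euX F p₀ ε ⌊max t 0 / ε⌋₊ + (max t 0 - ⌊max t 0 / ε⌋₊ * ε) • euS F p₀ ε ⌊max t 0 / ε⌋₊

variable {F : E → Set E} {Sig : Set E} {p₀ : E} {ε : ℝ}

lemma euX_mem (hconv : Convex ℝ Sig) (hsel : ∀ z ∈ Sig, sel F z ∈ Sig) (hp₀ : p₀ ∈ Sig)
    (hε0 : 0 ≤ ε) (hε1 : ε ≤ 1) : ∀ j, euX F p₀ ε j ∈ Sig := by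
  intro j
  induction j with
  | zero => exact hp₀
  | succ j ih =>
      have h : euX F p₀ ε (j + 1)
          = (1 - ε) • euX F p₀ ε j + ε • sel F (euX F p₀ ε j) := by
        show euX F p₀ ε j + ε • (sel F (euX F p₀ ε j) - euX F p₀ ε j) = _
        module
      rw [h]
      exact hconv ih (hsel _ ih) (by linarith) hε0 (by ring)

lemma euX_sum : ∀ m, euX F p₀ ε m = p₀ + ∑ j ∈ Finset.range m, ε • euS F p₀ ε j := by
  intro m
  induction m with
  | zero => simp [euX]
  | succ m ih =>
      rw [Finset.sum_range_succ, ← add_assoc, ← ih]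
      show euX F p₀ ε m + ε • (sel F (euX F p₀ ε m) - euX F p₀ ε m) = _
      rw [euS]

lemma euP_of_nonneg {t : ℝ} (ht : 0 ≤ t) :
    euP F p₀ ε t = euX F p₀ ε ⌊t / ε⌋₊ + (t - ⌊t / ε⌋₊ * ε) • euS F p₀ ε ⌊t / ε⌋₊ := by
  rw [euP, max_eq_left ht]

lemma euP_sum {t : ℝ} (ht : 0 ≤ t) :
    euP F p₀ ε t = p₀ + ∑ j ∈ Finset.range ⌊t / ε⌋₊, ε • euS F p₀ ε j
      + (t - ⌊t / ε⌋₊ * ε) • euS F p₀ ε ⌊t / ε⌋₊ := by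
  rw [euP_of_nonneg ht, euX_sum]

lemma floor_mul_le (hε : 0 < ε) {t : ℝ} (ht : 0 ≤ t) : (⌊t / ε⌋₊ : ℝ) * ε ≤ t := by
  have := Nat.floor_le (div_nonneg ht hε.le)
  calc (⌊t / ε⌋₊ : ℝ) * ε ≤ (t / ε) * ε := by nlinarith
  _ = t := by field_simp

lemma lt_floor_succ_mul (hε : 0 < ε) (t : ℝ) : t < ((⌊t / ε⌋₊ : ℝ) + 1) * ε := by
  rcases le_or_gt 0 t with ht | ht
  · have := Nat.lt_floor_add_one (t / ε)
    calc t = (t / ε) * ε := by field_simp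
    _ < ((⌊t / ε⌋₊ : ℝ) + 1) * ε := by nlinarith
  · have : (0:ℝ) < ((⌊t / ε⌋₊ : ℝ) + 1) * ε := by positivity
    linarith

lemma euP_node (hε : 0 < ε) (j : ℕ) : euP F p₀ ε ((j : ℝ) * ε) = euX F p₀ ε j := by
  have hj : (0:ℝ) ≤ (j : ℝ) * ε := by positivity
  have hd : ((j : ℝ) * ε) / ε = (j : ℝ) := by field_simp
  rw [euP_of_nonneg hj, hd, Nat.floor_natCast]
  simp


lemma euP_sub (hε : 0 < ε) {a b : ℝ} (ha : 0 ≤ a) (hab : a ≤ b) :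
    euP F p₀ ε b - euP F p₀ ε a
      = ∑ j ∈ Finset.Icc ⌊a / ε⌋₊ ⌊b / ε⌋₊,
          (min b (((j : ℝ) + 1) * ε) - max a ((j : ℝ) * ε)) • euS F p₀ ε j := by
  have hb : 0 ≤ b := le_trans ha hab
  set m := ⌊a / ε⌋₊ with hm
  set M := ⌊b / ε⌋₊ with hM
  have hmM : m ≤ M := Nat.floor_mono (by gcongr)
  have hma : (m : ℝ) * ε ≤ a := floor_mul_le hε ha
  have ham : a < ((m : ℝ) + 1) * ε := lt_floor_succ_mul hε a
  have hMb : (M : ℝ) * ε ≤ b := floor_mul_le hε hb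
  have hbM : b < ((M : ℝ) + 1) * ε := lt_floor_succ_mul hε b
  clear_value m M
  rw [euP_sum hb, euP_sum ha, ← hm, ← hM]
  rw [show p₀ + ∑ j ∈ Finset.range M, ε • euS F p₀ ε j + (b - ↑M * ε) • euS F p₀ ε M
      - (p₀ + ∑ j ∈ Finset.range m, ε • euS F p₀ ε j + (a - ↑m * ε) • euS F p₀ ε m)
      = (∑ j ∈ Finset.range M, ε • euS F p₀ ε j - ∑ j ∈ Finset.range m, ε • euS F p₀ ε j)
        + (b - ↑M * ε) • euS F p₀ ε M - (a - ↑m * ε) • euS F p₀ ε m by abel]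
  rw [← Finset.sum_Ico_eq_sub _ hmM]
  rw [← Finset.Ico_insert_right hmM, Finset.sum_insert Finset.right_notMem_Ico]
  rcases eq_or_lt_of_le hmM with h | h
  · subst h
    have h1 : min b (((m : ℝ) + 1) * ε) = b := min_eq_left hbM.le
    have h2 : max a ((m : ℝ) * ε) = a := max_eq_left hma
    rw [Finset.Ico_self]
    simp [h1, h2, sub_smul]
  · have hcongr : ∀ j ∈ Finset.Ico m M,
        (min b (((j : ℝ) + 1) * ε) - max a ((j : ℝ) * ε)) • euS F p₀ ε j
        = ε • euS F p₀ ε j - (if j = m then (a - (m : ℝ) * ε) • euS F p₀ ε m else 0) := by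
      intro j hj
      rw [Finset.mem_Ico] at hj
      have hj1 : ((j : ℝ) + 1) * ε ≤ b := by
        have : ((j : ℝ) + 1) ≤ (M : ℝ) := by exact_mod_cast hj.2
        nlinarith
      rw [min_eq_right hj1]
      rcases eq_or_ne j m with rfl | hne
      · rw [if_pos rfl, max_eq_left hma, ← sub_smul]
        congr 1; ring
      · have hjm : m + 1 ≤ j := Nat.succ_le_of_lt (lt_of_le_of_ne hj.1 (Ne.symm hne))
        have : ((m : ℝ) + 1) * ε ≤ (j : ℝ) * ε := by
          have : ((m : ℝ) + 1) ≤ (j : ℝ) := by exact_mod_cast hjm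
          nlinarith
        rw [if_neg hne, max_eq_right (by linarith), sub_zero]
        congr 1; ring
    rw [Finset.sum_congr rfl hcongr, Finset.sum_sub_distrib,
      Finset.sum_ite_eq' (Finset.Ico m M) m (fun _ => (a - (m : ℝ) * ε) • euS F p₀ ε m),
      if_pos (Finset.mem_Ico.mpr ⟨le_refl m, h⟩)]
    have hMm : ((m : ℝ) + 1) * ε ≤ (M:ℝ) * ε := by
      have : ((m : ℝ) + 1) ≤ (M : ℝ) := by exact_mod_cast h
      nlinarith
    rw [min_eq_left hbM.le, max_eq_right (by linarith)]
    abel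

lemma euP_coeff_nonneg (hε : 0 < ε) {a b : ℝ} (ha : 0 ≤ a) (hab : a ≤ b) {j : ℕ}
    (hj : j ∈ Finset.Icc ⌊a / ε⌋₊ ⌊b / ε⌋₊) :
    0 ≤ min b (((j : ℝ) + 1) * ε) - max a ((j : ℝ) * ε) := by
  have hb : 0 ≤ b := le_trans ha hab
  rw [Finset.mem_Icc] at hj
  have h1 : ((⌊a / ε⌋₊ : ℝ)) ≤ (j : ℝ) := by exact_mod_cast hj.1
  have h2 : (j : ℝ) ≤ (⌊b / ε⌋₊ : ℝ) := by exact_mod_cast hj.2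
  have hma : a < ((⌊a / ε⌋₊ : ℝ) + 1) * ε := lt_floor_succ_mul hε a
  have hMb : (⌊b / ε⌋₊ : ℝ) * ε ≤ b := floor_mul_le hε hb
  have hjb : (j : ℝ) * ε ≤ b := by nlinarith
  have haj : a ≤ ((j : ℝ) + 1) * ε := by nlinarith
  have : max a ((j : ℝ) * ε) ≤ min b (((j : ℝ) + 1) * ε) := by
    apply max_le <;> [skip; skip] <;> apply le_min <;> nlinarith
  linarith

lemma euP_coeff_sum (hε : 0 < ε) {a b : ℝ} (ha : 0 ≤ a) (hab : a ≤ b) :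
    ∑ j ∈ Finset.Icc ⌊a / ε⌋₊ ⌊b / ε⌋₊,
      (min b (((j : ℝ) + 1) * ε) - max a ((j : ℝ) * ε)) = b - a := by
  have hb : 0 ≤ b := le_trans ha hab
  set m := ⌊a / ε⌋₊ with hm
  set M := ⌊b / ε⌋₊ with hM
  have hmM : m ≤ M := Nat.floor_mono (by gcongr)
  have hma : (m : ℝ) * ε ≤ a := floor_mul_le hε ha
  have ham : a < ((m : ℝ) + 1) * ε := lt_floor_succ_mul hε a
  have hMb : (M : ℝ) * ε ≤ b := floor_mul_le hε hb
  have hbM : b < ((M : ℝ) + 1) * ε := lt_floor_succ_mul hε b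
  clear_value m M
  rw [← Finset.Ico_insert_right hmM, Finset.sum_insert Finset.right_notMem_Ico]
  rcases eq_or_lt_of_le hmM with h | h
  · subst h
    rw [Finset.Ico_self, min_eq_left hbM.le, max_eq_left hma]
    simp
  · have hcongr : ∀ j ∈ Finset.Ico m M,
        (min b (((j : ℝ) + 1) * ε) - max a ((j : ℝ) * ε))
        = ε - (if j = m then a - (m : ℝ) * ε else 0) := by
      intro j hj
      rw [Finset.mem_Ico] at hj
      have hj1 : ((j : ℝ) + 1) * ε ≤ b := by
        have : ((j : ℝ) + 1) ≤ (M : ℝ) := by exact_mod_cast hj.2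
        nlinarith
      rw [min_eq_right hj1]
      rcases eq_or_ne j m with rfl | hne
      · rw [if_pos rfl, max_eq_left hma]; ring
      · have hjm : m + 1 ≤ j := Nat.succ_le_of_lt (lt_of_le_of_ne hj.1 (Ne.symm hne))
        have : ((m : ℝ) + 1) * ε ≤ (j : ℝ) * ε := by
          have : ((m : ℝ) + 1) ≤ (j : ℝ) := by exact_mod_cast hjm
          nlinarith
        rw [if_neg hne, max_eq_right (by linarith)]; ring
    rw [Finset.sum_congr rfl hcongr, Finset.sum_sub_distrib,
      Finset.sum_ite_eq' (Finset.Ico m M) m (fun _ => a - (m : ℝ) * ε),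
      if_pos (Finset.mem_Ico.mpr ⟨le_refl m, h⟩), Finset.sum_const, Nat.card_Ico,
      nsmul_eq_mul]
    have hMm : ((m : ℝ) + 1) * ε ≤ (M:ℝ) * ε := by
      have : ((m : ℝ) + 1) ≤ (M : ℝ) := by exact_mod_cast h
      nlinarith
    rw [min_eq_left hbM.le, max_eq_right (by linarith), Nat.cast_sub hmM]
    ring


lemma euP_mem (hconv : Convex ℝ Sig)
    (hne : ∀ z ∈ Sig, (F z).Nonempty) (hsub : ∀ z ∈ Sig, F z ⊆ Sig) (hp₀ : p₀ ∈ Sig)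
    (hε0 : 0 < ε) (hε1 : ε ≤ 1) (t : ℝ) : euP F p₀ ε t ∈ Sig := by
  have hsel : ∀ z ∈ Sig, sel F z ∈ Sig := fun z hz => hsub z hz (sel_mem (hne z hz))
  have hX : ∀ j, euX F p₀ ε j ∈ Sig := euX_mem hconv hsel hp₀ hε0.le hε1
  set s := max t 0 with hs
  have hs0 : 0 ≤ s := le_max_right _ _
  set j := ⌊s / ε⌋₊ with hj
  have h1 : (j : ℝ) * ε ≤ s := floor_mul_le hε0 hs0
  have h2 : s < ((j : ℝ) + 1) * ε := lt_floor_succ_mul hε0 s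
  have key : euP F p₀ ε t
      = (1 - (s - (j:ℝ) * ε)) • euX F p₀ ε j + (s - (j:ℝ) * ε) • sel F (euX F p₀ ε j) := by
    rw [euP, euS, ← hs, ← hj]
    module
  rw [key]
  have hθ0 : 0 ≤ s - (j:ℝ) * ε := by linarith
  have hθ1 : s - (j:ℝ) * ε ≤ 1 := by nlinarith
  exact hconv (hX j) (hsel _ (hX j)) (by linarith) hθ0 (by ring)

lemma euP_dist_le {C : ℝ} (hε : 0 < ε) (hC : ∀ j, ‖euS F p₀ ε j‖ ≤ C)
    (s r : ℝ) : dist (euP F p₀ ε s) (euP F p₀ ε r) ≤ C * |s - r| := by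
  have key : ∀ a b : ℝ, 0 ≤ a → a ≤ b →
      dist (euP F p₀ ε b) (euP F p₀ ε a) ≤ C * (b - a) := by
    intro a b ha hab
    rw [dist_eq_norm, euP_sub hε ha hab]
    calc ‖∑ j ∈ Finset.Icc ⌊a / ε⌋₊ ⌊b / ε⌋₊,
          (min b (((j : ℝ) + 1) * ε) - max a ((j : ℝ) * ε)) • euS F p₀ ε j‖
        ≤ ∑ j ∈ Finset.Icc ⌊a / ε⌋₊ ⌊b / ε⌋₊,
          ‖(min b (((j : ℝ) + 1) * ε) - max a ((j : ℝ) * ε)) • euS F p₀ ε j‖ :=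
        norm_sum_le _ _
      _ ≤ ∑ j ∈ Finset.Icc ⌊a / ε⌋₊ ⌊b / ε⌋₊,
          (min b (((j : ℝ) + 1) * ε) - max a ((j : ℝ) * ε)) * C := by
        apply Finset.sum_le_sum
        intro j hj
        rw [norm_smul, Real.norm_eq_abs, abs_of_nonneg (euP_coeff_nonneg hε ha hab hj)]
        exact mul_le_mul_of_nonneg_left (hC j) (euP_coeff_nonneg hε ha hab hj)
      _ = (b - a) * C := by rw [← Finset.sum_mul, euP_coeff_sum hε ha hab]
      _ = C * (b - a) := by ring
  have hC0 : 0 ≤ C := le_trans (norm_nonneg _) (hC 0)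
  have hmax : ∀ t : ℝ, euP F p₀ ε t = euP F p₀ ε (max t 0) := by
    intro t; rw [euP, euP, max_eq_left (le_max_right t 0)]
  rw [hmax s, hmax r]
  have habs : |max s 0 - max r 0| ≤ |s - r| := abs_max_sub_max_le_abs s r 0
  rcases le_total (max r 0) (max s 0) with h | h
  · calc dist (euP F p₀ ε (max s 0)) (euP F p₀ ε (max r 0))
        ≤ C * (max s 0 - max r 0) := key _ _ (le_max_right _ _) h
      _ ≤ C * |s - r| := by
        apply mul_le_mul_of_nonneg_left _ hC0
        calc max s 0 - max r 0 ≤ |max s 0 - max r 0| := le_abs_self _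
        _ ≤ |s - r| := habs
  · rw [dist_comm]
    calc dist (euP F p₀ ε (max r 0)) (euP F p₀ ε (max s 0))
        ≤ C * (max r 0 - max s 0) := key _ _ (le_max_right _ _) h
      _ ≤ C * |s - r| := by
        apply mul_le_mul_of_nonneg_left _ hC0
        calc max r 0 - max s 0 ≤ |max s 0 - max r 0| := by
              rw [abs_sub_comm]; exact le_abs_self _
        _ ≤ |s - r| := habs

lemma euP_slope_mem (hε : 0 < ε) {a b : ℝ} (ha : 0 ≤ a) (hab : a < b)
    {SS : Set E} (hSS : ∀ j ∈ Finset.Icc ⌊a / ε⌋₊ ⌊b / ε⌋₊, euS F p₀ ε j ∈ SS) :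
    (b - a)⁻¹ • (euP F p₀ ε b - euP F p₀ ε a) ∈ convexHull ℝ SS := by
  rw [euP_sub hε ha hab.le, Finset.smul_sum]
  have : ∀ j ∈ Finset.Icc ⌊a / ε⌋₊ ⌊b / ε⌋₊,
      (b - a)⁻¹ • ((min b (((j : ℝ) + 1) * ε) - max a ((j : ℝ) * ε)) • euS F p₀ ε j)
      = ((b - a)⁻¹ * (min b (((j : ℝ) + 1) * ε) - max a ((j : ℝ) * ε))) • euS F p₀ ε j := by
    intro j _; rw [smul_smul]
  rw [Finset.sum_congr rfl this]
  apply (convex_convexHull ℝ SS).sum_mem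
  · intro j hj
    exact mul_nonneg (inv_nonneg.mpr (by linarith)) (euP_coeff_nonneg hε ha hab.le hj)
  · rw [← Finset.mul_sum, euP_coeff_sum hε ha hab.le,
      inv_mul_cancel₀ (sub_ne_zero_of_ne hab.ne')]
  · intro j hj
    exact subset_convexHull ℝ SS (hSS j hj)


lemma euS_norm_le {C : ℝ} (hconv : Convex ℝ Sig)
    (hne : ∀ z ∈ Sig, (F z).Nonempty) (hsub : ∀ z ∈ Sig, F z ⊆ Sig) (hp₀ : p₀ ∈ Sig)
    (hε0 : 0 ≤ ε) (hε1 : ε ≤ 1)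
    (hC : ∀ x ∈ Sig, ∀ y ∈ Sig, dist x y ≤ C) (j : ℕ) : ‖euS F p₀ ε j‖ ≤ C := by
  have hsel : ∀ z ∈ Sig, sel F z ∈ Sig := fun z hz => hsub z hz (sel_mem (hne z hz))
  have hX : euX F p₀ ε j ∈ Sig := euX_mem hconv hsel hp₀ hε0 hε1 j
  rw [euS, ← dist_eq_norm]
  exact hC _ (hsel _ hX) _ hX

lemma key_step2 (hcomp : IsCompact Sig)
    (hcv : ∀ p ∈ Sig, Convex ℝ (F p)) (hcl : ∀ p ∈ Sig, IsClosed (F p))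
    (hsub : ∀ p ∈ Sig, F p ⊆ Sig)
    (husc : IsClosed {q : E × E | q.1 ∈ Sig ∧ q.2 ∈ F q.1})
    {c d : E} (hc : c ∈ Sig)
    (hA : ∀ δ > 0, d ∈ closure (convexHull ℝ
      {y | ∃ z ∈ Sig, dist z c ≤ δ ∧ ∃ w ∈ F z, y = w - z})) :
    c + d ∈ F c := by
  by_contra hnot
  set Cset : Set E := (fun w => w - c) '' F c with hCset
  have hdC : d ∉ Cset := by
    rintro ⟨w, hw, hwd⟩
    apply hnot
    have hwcd : w = c + d := by rw [← hwd]; module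
    rwa [← hwcd]
  have hCconv : Convex ℝ Cset := by
    have h1 : Cset = (fun w => (-c) + w) '' F c := by
      ext y; simp [hCset, sub_eq_neg_add]
    rw [h1]
    exact (hcv c hc).translate (-c)
  have hCclosed : IsClosed Cset := by
    have hFcomp : IsCompact (F c) := hcomp.of_isClosed_subset (hcl c hc) (hsub c hc)
    exact (hFcomp.image (continuous_id.sub continuous_const)).isClosed
  obtain ⟨f, u, hfu, hud⟩ := geometric_hahn_banach_closed_point hCconv hCclosed hdC
  have hsep : ∃ δ > 0, ∀ y ∈ {y | ∃ z ∈ Sig, dist z c ≤ δ ∧ ∃ w ∈ F z, y = w - z},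
      f y ≤ u := by
    by_contra h'
    push_neg at h'
    have hseq : ∀ m : ℕ, ∃ z, z ∈ Sig ∧ dist z c ≤ 1 / ((m : ℝ) + 1)
        ∧ ∃ w, w ∈ F z ∧ u < f (w - z) := by
      intro m
      obtain ⟨y, hy, hfy⟩ := h' (1 / ((m : ℝ) + 1)) (by positivity)
      obtain ⟨z, hz, hdz, w, hw, rfl⟩ := hy
      exact ⟨z, hz, hdz, w, hw, hfy⟩
    choose z hz hdz w hw hfw using hseq
    have hmemG : ∀ m, (z m, w m) ∈ {q : E × E | q.1 ∈ Sig ∧ q.2 ∈ F q.1} :=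
      fun m => ⟨hz m, hw m⟩
    have hGcomp : IsCompact {q : E × E | q.1 ∈ Sig ∧ q.2 ∈ F q.1} :=
      (hcomp.prod hcomp).of_isClosed_subset husc
        (fun q hq => Set.mem_prod.mpr ⟨hq.1, hsub _ hq.1 hq.2⟩)
    obtain ⟨zw, hzwG, φ, hφ, hlim⟩ := hGcomp.tendsto_subseq hmemG
    have hz1 : Filter.Tendsto (fun m => z (φ m)) Filter.atTop (𝓝 zw.1) :=
      (continuous_fst.tendsto zw).comp hlim
    have hw1 : Filter.Tendsto (fun m => w (φ m)) Filter.atTop (𝓝 zw.2) :=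
      (continuous_snd.tendsto zw).comp hlim
    have hzc : Filter.Tendsto (fun m => z (φ m)) Filter.atTop (𝓝 c) := by
      have hbound : ∀ m : ℕ, dist (z (φ m)) c ≤ 1 / ((m : ℝ) + 1) := by
        intro m
        refine le_trans (hdz (φ m)) (one_div_le_one_div_of_le (by positivity) ?_)
        have h1 : m ≤ φ m := hφ.le_apply
        exact_mod_cast Nat.succ_le_succ h1
      rw [tendsto_iff_dist_tendsto_zero]
      exact squeeze_zero (fun m => dist_nonneg) hbound
        tendsto_one_div_add_atTop_nhds_zero_nat
    have hz1c : zw.1 = c := tendsto_nhds_unique hz1 hzc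
    have hflim : Filter.Tendsto (fun m => f (w (φ m) - z (φ m))) Filter.atTop
        (𝓝 (f (zw.2 - zw.1))) := (f.continuous.tendsto _).comp (hw1.sub hz1)
    have hge : u ≤ f (zw.2 - zw.1) := ge_of_tendsto' hflim (fun m => (hfw (φ m)).le)
    have hlt : f (zw.2 - zw.1) < u := by
      rw [hz1c]
      exact hfu _ ⟨zw.2, by rw [← hz1c]; exact hzwG.2, rfl⟩
    linarith
  obtain ⟨δ, hδ, hhalf⟩ := hsep
  have hd_in : d ∈ {y | f y ≤ u} := by
    have hhs : closure (convexHull ℝ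
        {y | ∃ z ∈ Sig, dist z c ≤ δ ∧ ∃ w ∈ F z, y = w - z}) ⊆ {y | f y ≤ u} :=
      closure_minimal (convexHull_min hhalf (convex_halfSpace_le ⟨f.map_add, f.map_smul⟩ u))
        (isClosed_le f.continuous continuous_const)
    exact hhs (hA δ hδ)
  have : f d ≤ u := hd_in
  linarith

end AubinAux

open MeasureTheory in
/-- Aubin–Cellina existence theorem for the best-response differential inclusion:
if `F` is an upper semicontinuous (closed graph) set-valued map on a compact
convex `Σ ⊂ ℝⁿ` with nonempty closed convex values contained in `Σ`, then for
every `p₀ ∈ Σ` the inclusion `dp/dt ∈ F(p) - p` has a Lipschitz solution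
defined on `[0,∞)` staying in `Σ` and starting at `p₀`. -/
theorem aubin_cellina_existence (n : ℕ) (Sig : Set (Fin n → ℝ))
    (hcomp : IsCompact Sig) (hconv : Convex ℝ Sig)
    (F : (Fin n → ℝ) → Set (Fin n → ℝ))
    (hne : ∀ p ∈ Sig, (F p).Nonempty)
    (hcl : ∀ p ∈ Sig, IsClosed (F p))
    (hcv : ∀ p ∈ Sig, Convex ℝ (F p))
    (hsub : ∀ p ∈ Sig, F p ⊆ Sig)
    (husc : IsClosed {q : (Fin n → ℝ) × (Fin n → ℝ) | q.1 ∈ Sig ∧ q.2 ∈ F q.1})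
    (p₀ : Fin n → ℝ) (hp₀ : p₀ ∈ Sig) :
    ∃ (p : ℝ → Fin n → ℝ) (K : NNReal),
      LipschitzOnWith K p (Set.Ici 0) ∧ p 0 = p₀ ∧
      (∀ t ∈ Set.Ici (0 : ℝ), p t ∈ Sig) ∧
      ∀ᵐ t ∂(volume.restrict (Set.Ici (0 : ℝ))),
        ∃ v ∈ F (p t), HasDerivAt p (v - p t) t := by
  classical
  obtain ⟨C, hC'⟩ := Metric.isBounded_iff.mp hcomp.isBounded
  have hC : ∀ x ∈ Sig, ∀ y ∈ Sig, dist x y ≤ C := fun x hx y hy => hC' hx hy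
  have hC0 : 0 ≤ C := le_trans dist_nonneg (hC _ hp₀ _ hp₀)
  set ε : ℕ → ℝ := fun k => 1 / ((k : ℝ) + 1) with hεdef
  have hε0 : ∀ k, 0 < ε k := fun k => by positivity
  have hε1 : ∀ k, ε k ≤ 1 := by
    intro k
    rw [hεdef]
    rw [div_le_one (by positivity)]
    simp [Nat.cast_nonneg]
  set q : ℕ → ℝ → (Fin n → ℝ) := fun k => AubinAux.euP F p₀ (ε k) with hqdef
  have hqS : ∀ k j, ‖AubinAux.euS F p₀ (ε k) j‖ ≤ C := fun k j =>
    AubinAux.euS_norm_le hconv hne hsub hp₀ (hε0 k).le (hε1 k) hC j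
  have hqdist : ∀ k s r, dist (q k s) (q k r) ≤ C * |s - r| := fun k =>
    AubinAux.euP_dist_le (hε0 k) (hqS k)
  have hqmem : ∀ k t, q k t ∈ Sig := fun k t =>
    AubinAux.euP_mem hconv hne hsub hp₀ (hε0 k) (hε1 k) t
  have hq0 : ∀ k, q k 0 = p₀ := by
    intro k
    have h := AubinAux.euP_node (F := F) (p₀ := p₀) (hε0 k) 0
    simpa [AubinAux.euX] using h
  -- pointwise limit along an ultrafilter
  let U : Ultrafilter ℕ := Ultrafilter.of Filter.atTop
  have hU : (U : Filter ℕ) ≤ Filter.atTop := Ultrafilter.of_le _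
  have hlim : ∀ t : ℝ, ∃ y ∈ Sig, Filter.Tendsto (fun k => q k t) (U : Filter ℕ) (𝓝 y) := by
    intro t
    obtain ⟨y, hy, hyle⟩ := hcomp.ultrafilter_le_nhds (U.map (fun k => q k t))
      (le_principal_iff.mpr (Filter.mem_map.mpr (Filter.univ_mem' (fun k => hqmem k t))))
    exact ⟨y, hy, hyle⟩
  choose p hpSig hp using hlim
  have hp0 : p 0 = p₀ := by
    refine tendsto_nhds_unique (hp 0) ?_
    have : (fun k => q k 0) = fun _ => p₀ := funext hq0
    rw [this]
    exact tendsto_const_nhds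
  have hplip : ∀ s r : ℝ, dist (p s) (p r) ≤ C * |s - r| := by
    intro s r
    exact le_of_tendsto ((hp s).dist (hp r))
      (Filter.Eventually.of_forall (fun k => hqdist k s r))
  set K := C.toNNReal with hK
  have hKC : (K : ℝ) = C := Real.coe_toNNReal C hC0
  have hlipp : LipschitzWith K p := by
    apply LipschitzWith.of_dist_le_mul
    intro x y
    rw [hKC]
    simpa [Real.dist_eq] using hplip x y
  have hdiff : ∀ᵐ t ∂(volume : Measure ℝ), DifferentiableAt ℝ p t :=
    hlipp.ae_differentiableAt
  refine ⟨p, K, hlipp.lipschitzOnWith, hp0, fun t _ => hpSig t, ?_⟩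
  have h1 : ∀ᵐ t ∂(volume.restrict (Set.Ici (0 : ℝ))), DifferentiableAt ℝ p t :=
    Filter.Eventually.filter_mono (MeasureTheory.ae_mono Measure.restrict_le_self) hdiff
  have h2 : ∀ᵐ t ∂(volume.restrict (Set.Ici (0 : ℝ))), t ∈ Set.Ici (0 : ℝ) :=
    ae_restrict_mem measurableSet_Ici
  have h3 : ∀ᵐ t ∂(volume.restrict (Set.Ici (0 : ℝ))), t ≠ 0 := by
    rw [MeasureTheory.ae_iff]
    have he : {a : ℝ | ¬ a ≠ 0} = {(0 : ℝ)} := by ext; simp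
    rw [he, Measure.restrict_apply (measurableSet_singleton 0)]
    exact le_antisymm (le_trans (measure_mono Set.inter_subset_left) (by simp)) (zero_le)
  filter_upwards [h1, h2, h3] with t hdt ht ht0
  have htpos : (0 : ℝ) < t := lt_of_le_of_ne ht (Ne.symm ht0)
  set c := p t with hc
  set d := deriv p t with hd
  have hder : HasDerivAt p d t := hdt.hasDerivAt
  have hmain : ∀ δ > (0:ℝ), d ∈ closure (convexHull ℝ
      {y | ∃ z ∈ Sig, dist z c ≤ δ ∧ ∃ w ∈ F z, y = w - z}) := by
    intro δ hδ
    set A := {y | ∃ z ∈ Sig, dist z c ≤ δ ∧ ∃ w ∈ F z, y = w - z} with hA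
    have hslope : Filter.Tendsto (slope p t) (𝓝[>] t) (𝓝 d) :=
      (hasDerivAt_iff_tendsto_slope.mp hder).mono_left
        (nhdsWithin_mono t (fun x hx => ne_of_gt hx))
    rw [← closure_closure (s := convexHull ℝ A)]
    refine mem_closure_of_tendsto hslope ?_
    set δ₁ := δ / (4 * (C + 1)) with hδ₁
    have hδ₁pos : 0 < δ₁ := by positivity
    have hIoo : Set.Ioo t (t + δ₁) ∈ 𝓝[>] t :=
      Ioo_mem_nhdsGT_of_mem ⟨le_refl t, by linarith⟩
    filter_upwards [hIoo] with b hb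
    have hbt : t < b := hb.1
    rw [slope_def_module]
    have hqslope : Filter.Tendsto (fun k => (b - t)⁻¹ • (q k b - q k t)) (U : Filter ℕ)
        (𝓝 ((b - t)⁻¹ • (p b - p t))) := ((hp b).sub (hp t)).const_smul _
    refine mem_closure_of_tendsto hqslope ?_
    have hev1 : ∀ᶠ k in (U : Filter ℕ), dist (q k t) c < δ / 4 :=
      Metric.tendsto_nhds.mp (hp t) _ (by positivity)
    have hev2 : ∀ᶠ k in (U : Filter ℕ), ε k < δ₁ := by
      have htz : Filter.Tendsto ε Filter.atTop (𝓝 0) :=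
        tendsto_one_div_add_atTop_nhds_zero_nat
      exact (htz.mono_left hU).eventually_lt_const hδ₁pos
    filter_upwards [hev1, hev2] with k hk1 hk2
    have hSS : ∀ j ∈ Finset.Icc ⌊t / ε k⌋₊ ⌊b / ε k⌋₊,
        AubinAux.euS F p₀ (ε k) j ∈ A := by
      intro j hj
      rw [Finset.mem_Icc] at hj
      have hsel : ∀ z ∈ Sig, AubinAux.sel F z ∈ Sig :=
        fun z hz => hsub z hz (AubinAux.sel_mem (hne z hz))
      have hx : AubinAux.euX F p₀ (ε k) j ∈ Sig :=
        AubinAux.euX_mem hconv hsel hp₀ (hε0 k).le (hε1 k) j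
      refine ⟨AubinAux.euX F p₀ (ε k) j, hx, ?_,
        AubinAux.sel F (AubinAux.euX F p₀ (ε k) j),
        AubinAux.sel_mem (hne _ hx), rfl⟩
      have hnode : q k ((j : ℝ) * ε k) = AubinAux.euX F p₀ (ε k) j :=
        AubinAux.euP_node (hε0 k) j
      have hd1 : dist (AubinAux.euX F p₀ (ε k) j) (q k t) ≤ C * |(j : ℝ) * ε k - t| := by
        rw [← hnode]; exact hqdist k _ t
      have hjle : (j : ℝ) * ε k ≤ b := by
        have h1 : (j : ℝ) ≤ (⌊b / ε k⌋₊ : ℝ) := by exact_mod_cast hj.2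
        have h2 : (⌊b / ε k⌋₊ : ℝ) * ε k ≤ b :=
          AubinAux.floor_mul_le (hε0 k) (by linarith : (0:ℝ) ≤ b)
        nlinarith [(hε0 k)]
      have hjge : t - ε k ≤ (j : ℝ) * ε k := by
        have h1 : (⌊t / ε k⌋₊ : ℝ) ≤ (j : ℝ) := by exact_mod_cast hj.1
        have h2 : t < ((⌊t / ε k⌋₊ : ℝ) + 1) * ε k :=
          AubinAux.lt_floor_succ_mul (hε0 k) t
        nlinarith [(hε0 k)]
      have habs : |(j : ℝ) * ε k - t| ≤ (b - t) + ε k :=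
        abs_le.mpr ⟨by linarith [hε0 k], by linarith [hε0 k]⟩
      calc dist (AubinAux.euX F p₀ (ε k) j) c
          ≤ dist (AubinAux.euX F p₀ (ε k) j) (q k t) + dist (q k t) c := dist_triangle _ _ _
        _ ≤ C * ((b - t) + ε k) + δ / 4 := by
            have := mul_le_mul_of_nonneg_left habs hC0
            linarith [hd1, hk1.le, le_trans hd1 this]
        _ ≤ δ := by
            have hbd : b - t ≤ δ₁ := by
              have := hb.2; linarith
            have hεd : ε k ≤ δ₁ := hk2.le
            have hkey : C * ((b - t) + ε k) ≤ C * (2 * δ₁) := by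
              apply mul_le_mul_of_nonneg_left (by linarith) hC0
            have hc1 : (0:ℝ) < C + 1 := by linarith
            have hne1 : (C + 1 : ℝ) ≠ 0 := hc1.ne'
            have h2d : C * (2 * δ₁) ≤ δ / 2 := by
              have heq2 : C * (2 * δ₁) = (C / (C + 1)) * (δ / 2) := by
                rw [hδ₁]; field_simp; ring
              rw [heq2]
              have hfrac : C / (C + 1) ≤ 1 := by
                rw [div_le_one hc1]; linarith
              calc (C / (C + 1)) * (δ / 2) ≤ 1 * (δ / 2) :=
                    mul_le_mul_of_nonneg_right hfrac (by linarith)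
                _ = δ / 2 := one_mul _
            linarith
    exact AubinAux.euP_slope_mem (hε0 k) (le_of_lt htpos) hbt hSS
  have hvF : c + d ∈ F c := AubinAux.key_step2 hcomp hcv hcl hsub husc (hpSig t) hmain
  refine ⟨c + d, hvF, ?_⟩
  have heq : c + d - p t = d := by rw [← hc]; exact add_sub_cancel_left c d
  rw [heq]
  exact hder
end

section
/- Consider the piecewise-linear planar flow where in each open quadrant the velocity is the constant unit-speed direction toward a designated target corner (clockwise spiralling as in a 2×2 fictitious play game), and let l₁, …, l₄ be the four coordinate half-axes met cyclically by the flow. Identify each half-axis with (0,∞) via distance to the origin in the adapted quadrilateral metric. Then each transition map f_m : l_m → l_{m+1} has the form r ↦ r/(1 + a_m r) for some constant a_m > 0, and consequently the first return map to l₁ is r ↦ r/(1 + a r) with a = a₁ + a₂ + a₃ + a₄ > 0; hence every orbit spirals into the origin. -/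
private lemma mob_comp {a b : ℝ} (ha : 0 < a) (hb : 0 < b) {r : ℝ} (hr : 0 < r) :
    (r / (1 + b * r)) / (1 + a * (r / (1 + b * r))) = r / (1 + (a + b) * r) := by
  have h1 : (1 : ℝ) + b * r ≠ 0 := by positivity
  have h2 : (1 : ℝ) + (a + b) * r ≠ 0 := by positivity
  field_simp
  ring_nf

/-- The clockwise spiralling piecewise-linear planar flow of a 2×2
fictitious-play game, with targets at the corners `(-d₁,e₁), (-d₁,-e₂),
(d₂,-e₂), (d₂,e₁)` of a rectangle: the Euclidean transition maps between
successive half-axes are the central projections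
`g₁(r) = e₁r/(r+d₁)`, `g₂(r) = d₁r/(r+e₂)`, `g₃(r) = e₂r/(r+d₂)`,
`g₄(r) = d₂r/(r+e₁)`.  There are positive scalings `c₁,…,c₄` of the four
half-axes (the adapted quadrilateral metric) in which each transition map takes
the Möbius form `r ↦ r/(1+aₘr)` with `aₘ > 0`; consequently the first return
map to the first half-axis is `r ↦ r/(1+ar)` with `a = a₁+a₂+a₃+a₄ > 0`, and
every orbit spirals into the origin. -/
theorem planar_spiral_return_map (d₁ d₂ e₁ e₂ : ℝ)
    (hd₁ : 0 < d₁) (hd₂ : 0 < d₂) (he₁ : 0 < e₁) (he₂ : 0 < e₂) :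
    ∃ c₁ c₂ c₃ c₄ a₁ a₂ a₃ a₄ : ℝ,
      0 < c₁ ∧ 0 < c₂ ∧ 0 < c₃ ∧ 0 < c₄ ∧
      0 < a₁ ∧ 0 < a₂ ∧ 0 < a₃ ∧ 0 < a₄ ∧
      (∀ r : ℝ, 0 < r →
        c₂ * (e₁ * (r / c₁) / (r / c₁ + d₁)) = r / (1 + a₁ * r) ∧
        c₃ * (d₁ * (r / c₂) / (r / c₂ + e₂)) = r / (1 + a₂ * r) ∧
        c₄ * (e₂ * (r / c₃) / (r / c₃ + d₂)) = r / (1 + a₃ * r) ∧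
        c₁ * (d₂ * (r / c₄) / (r / c₄ + e₁)) = r / (1 + a₄ * r)) ∧
      (∀ r : ℝ, 0 < r →
        ((fun u : ℝ => u / (1 + a₄ * u)) ∘ (fun u : ℝ => u / (1 + a₃ * u)) ∘
          (fun u : ℝ => u / (1 + a₂ * u)) ∘ (fun u : ℝ => u / (1 + a₁ * u))) r =
          r / (1 + (a₁ + a₂ + a₃ + a₄) * r)) ∧
      (∀ r : ℝ, 0 < r →
        Filter.Tendsto
          (fun n : ℕ =>
            ((fun u : ℝ => u / (1 + a₄ * u)) ∘ (fun u : ℝ => u / (1 + a₃ * u)) ∘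
              (fun u : ℝ => u / (1 + a₂ * u)) ∘ (fun u : ℝ => u / (1 + a₁ * u)))^[n] r)
          Filter.atTop (nhds 0)) := by
  refine ⟨1, d₁ / e₁, e₂ / e₁, d₂ / e₁, 1 / d₁, e₁ / (d₁ * e₂), e₁ / (e₂ * d₂), 1 / d₂,
    one_pos, by positivity, by positivity, by positivity,
    by positivity, by positivity, by positivity, by positivity, ?_, ?_, ?_⟩
  · intro r hr
    have h1 : r / 1 + d₁ ≠ 0 := by positivity
    have h2 : r / (d₁ / e₁) + e₂ ≠ 0 := by positivity
    have h3 : r / (e₂ / e₁) + d₂ ≠ 0 := by positivity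
    have h4 : r / (d₂ / e₁) + e₁ ≠ 0 := by positivity
    refine ⟨?_, ?_, ?_, ?_⟩ <;>
      · rw [eq_div_iff (by positivity)]
        field_simp
        ring
  · intro r hr
    have ha₁ : (0:ℝ) < 1 / d₁ := by positivity
    have ha₂ : (0:ℝ) < e₁ / (d₁ * e₂) := by positivity
    have ha₃ : (0:ℝ) < e₁ / (e₂ * d₂) := by positivity
    have ha₄ : (0:ℝ) < 1 / d₂ := by positivity
    simp only [Function.comp_apply]
    rw [mob_comp ha₂ ha₁ hr, mob_comp ha₃ (by linarith) (by positivity),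
      mob_comp ha₄ (by linarith) (by positivity)]
    ring_nf
  · intro r hr
    set a₁ : ℝ := 1 / d₁
    set a₂ : ℝ := e₁ / (d₁ * e₂)
    set a₃ : ℝ := e₁ / (e₂ * d₂)
    set a₄ : ℝ := 1 / d₂
    have ha₁ : 0 < a₁ := by positivity
    have ha₂ : 0 < a₂ := by positivity
    have ha₃ : 0 < a₃ := by positivity
    have ha₄ : 0 < a₄ := by positivity
    have ha : 0 < a₁ + a₂ + a₃ + a₄ := by linarith
    have key : ∀ u : ℝ, 0 < u →
        ((fun u : ℝ => u / (1 + a₄ * u)) ∘ (fun u : ℝ => u / (1 + a₃ * u)) ∘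
          (fun u : ℝ => u / (1 + a₂ * u)) ∘ (fun u : ℝ => u / (1 + a₁ * u))) u =
        (fun u : ℝ => u / (1 + (a₁ + a₂ + a₃ + a₄) * u)) u := by
      intro u hu
      simp only [Function.comp_apply]
      rw [mob_comp ha₂ ha₁ hu, mob_comp ha₃ (by linarith) (by positivity),
        mob_comp ha₄ (by linarith) (by positivity)]
      ring_nf
    set a := a₁ + a₂ + a₃ + a₄
    have hiter : ∀ n : ℕ,
        ((fun u : ℝ => u / (1 + a₄ * u)) ∘ (fun u : ℝ => u / (1 + a₃ * u)) ∘
          (fun u : ℝ => u / (1 + a₂ * u)) ∘ (fun u : ℝ => u / (1 + a₁ * u)))^[n] r =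
        r / (1 + n * a * r) := by
      intro n
      induction n with
      | zero => simp
      | succ n ih =>
        have hpos : 0 < r / (1 + n * a * r) := by positivity
        rw [Function.iterate_succ_apply', ih, key _ hpos]
        have h1 : (1 : ℝ) + n * a * r ≠ 0 := by positivity
        have h2 : (1 : ℝ) + (n + 1) * a * r ≠ 0 := by positivity
        push_cast
        field_simp
        ring_nf
    simp only [hiter]
    have : Filter.Tendsto (fun n : ℕ => (1 : ℝ) + n * a * r) Filter.atTop Filter.atTop := by
      apply Filter.tendsto_atTop_add_const_left
      exact Filter.Tendsto.atTop_mul_const hr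
        (Filter.Tendsto.atTop_mul_const ha tendsto_natCast_atTop_atTop)
    simpa using Filter.Tendsto.div_atTop (tendsto_const_nhds) this
end
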